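/- Let φ₀(θ) = √(cos θ(sin θ - cos θ)/a) for θ ∈ (π/4, π/2). On the critical manifold S₀² = {(θ, φ₀(θ))}, the nontrivial eigenvalue of the Jacobian of the vector field h(θ,r) = (-sin θ(sin θ - cos θ)p, -r cos θ(sin θ - cos θ)p), p(θ,r) = ar² - cos θ(sin θ - cos θ), equals its trace, and this trace is negative if and only if tan θ > 2 (for θ ∈ (π/4, π/2)), positive if tan θ < 2, and zero at θ = arctan 2. -/

import Mathlib

open Real Matrix

lemma rank_one_eigen (g1 g2 Pθ Pr : ℝ) (hg : g1 ≠ 0) :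
    Module.End.HasEigenvalue
      (Matrix.toLin' !![g1 * Pθ, g1 * Pr; g2 * Pθ, g2 * Pr]) (g1 * Pθ + g2 * Pr) := by
  apply Module.End.hasEigenvalue_of_hasEigenvector (x := ![g1, g2])
  constructor
  · rw [Module.End.mem_eigenspace_iff]
    funext i
    fin_cases i <;>
      simp [Matrix.toLin'_apply, Matrix.mulVec, dotProduct, Fin.sum_univ_two] <;> ring
  · intro h
    exact hg (by simpa using congrFun h 0)

set_option maxHeartbeats 1600000 in
/-- On the critical branch `S₀² = {(θ, φ₀(θ))}`, the Jacobian of `h` has zero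
determinant, its nontrivial eigenvalue equals its trace, and the trace is negative
iff `tan θ > 2`, positive iff `tan θ < 2`, and zero at `θ = arctan 2`. -/
theorem jacobian_on_S02_trace_sign (a : ℝ) (ha : 0 < a)
    (p h₁ h₂ : ℝ × ℝ → ℝ) (φ₀ : ℝ → ℝ)
    (hp : p = fun z => a * z.2 ^ 2 - cos z.1 * (sin z.1 - cos z.1))
    (hh₁ : h₁ = fun z => -sin z.1 * (sin z.1 - cos z.1) * p z)
    (hh₂ : h₂ = fun z => -z.2 * cos z.1 * (sin z.1 - cos z.1) * p z)
    (hφ₀ : φ₀ = fun θ => Real.sqrt (cos θ * (sin θ - cos θ) / a))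
    (J : ℝ → Matrix (Fin 2) (Fin 2) ℝ)
    (hJ : J = fun θ =>
      !![fderiv ℝ h₁ (θ, φ₀ θ) (1, 0), fderiv ℝ h₁ (θ, φ₀ θ) (0, 1);
         fderiv ℝ h₂ (θ, φ₀ θ) (1, 0), fderiv ℝ h₂ (θ, φ₀ θ) (0, 1)]) :
    ∀ θ : ℝ, π / 4 < θ → θ < π / 2 →
      (J θ).det = 0 ∧
      Module.End.HasEigenvalue (Matrix.toLin' (J θ)) ((J θ).trace) ∧
      ((J θ).trace < 0 ↔ 2 < tan θ) ∧
      (0 < (J θ).trace ↔ tan θ < 2) ∧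
      (θ = arctan 2 → (J θ).trace = 0) := by
  subst hp hh₁ hh₂ hφ₀ hJ
  intro θ hθ1 hθ2
  have hπ : (0:ℝ) < π := pi_pos
  have hθ0 : 0 < θ := by linarith
  have hs : 0 < sin θ := sin_pos_of_pos_of_lt_pi hθ0 (by linarith)
  have hc : 0 < cos θ := cos_pos_of_mem_Ioo ⟨by linarith, hθ2⟩
  have hcs : cos θ < sin θ := by
    have h := Real.strictMonoOn_sin (a := π/2 - θ) (b := θ)
      ⟨by linarith, by linarith⟩ ⟨by linarith, le_of_lt hθ2⟩ (by linarith)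
    rwa [Real.sin_pi_div_two_sub] at h
  obtain ⟨r, hrdef⟩ : ∃ r : ℝ, Real.sqrt (cos θ * (sin θ - cos θ) / a) = r := ⟨_, rfl⟩
  have hr2 : a * r ^ 2 = cos θ * (sin θ - cos θ) := by
    rw [← hrdef, Real.sq_sqrt (div_nonneg (mul_nonneg hc.le (by linarith)) ha.le)]
    field_simp
  have hP0 : a * (θ, r).2 ^ 2 - Real.cos (θ, r).1 * (Real.sin (θ, r).1 - Real.cos (θ, r).1) = 0 := by
    simp only; linarith
  -- derivatives
  have hcosd : HasFDerivAt (fun z : ℝ×ℝ => Real.cos z.1)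
      ((-Real.sin θ) • ContinuousLinearMap.fst ℝ ℝ ℝ) (θ, r) :=
    (Real.hasDerivAt_cos θ).comp_hasFDerivAt (h₂ := Real.cos) _ hasFDerivAt_fst
  have hsind : HasFDerivAt (fun z : ℝ×ℝ => Real.sin z.1)
      ((Real.cos θ) • ContinuousLinearMap.fst ℝ ℝ ℝ) (θ, r) :=
    (Real.hasDerivAt_sin θ).comp_hasFDerivAt (h₂ := Real.sin) _ hasFDerivAt_fst
  have hsq : HasFDerivAt (fun z : ℝ×ℝ => z.2 ^ 2)
      ((2 * r) • ContinuousLinearMap.snd ℝ ℝ ℝ) (θ, r) := by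
    have h : HasDerivAt (fun y : ℝ => y ^ 2) (2 * r) r := by simpa using hasDerivAt_pow 2 r
    exact h.comp_hasFDerivAt (h₂ := fun y : ℝ => y ^ 2) _ hasFDerivAt_snd
  have hLp := (hsq.const_mul a).fun_sub (hcosd.fun_mul (hsind.fun_sub hcosd))
  have hG1 := (hsind.fun_neg).fun_mul (hsind.fun_sub hcosd)
  have hG2 := ((hasFDerivAt_snd.fun_neg.fun_mul hcosd).fun_mul (hsind.fun_sub hcosd))
  have hF1 := (hG1.fun_mul hLp).fderiv
  have hF2 := (hG2.fun_mul hLp).fderiv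
  rw [hP0, zero_smul, add_zero] at hF1 hF2
  have e11 : fderiv ℝ (fun z : ℝ×ℝ => -sin z.1 * (sin z.1 - cos z.1) *
      (a * z.2 ^ 2 - cos z.1 * (sin z.1 - cos z.1))) (θ, r) (1, 0)
      = (-sin θ * (sin θ - cos θ)) * (sin θ * (sin θ - cos θ) - cos θ * (cos θ + sin θ)) := by
    rw [hF1]
    simp only [ContinuousLinearMap.add_apply, ContinuousLinearMap.smul_apply,
      ContinuousLinearMap.sub_apply, ContinuousLinearMap.neg_apply,
      ContinuousLinearMap.coe_fst', ContinuousLinearMap.coe_snd', smul_eq_mul]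
    ring
  have e12 : fderiv ℝ (fun z : ℝ×ℝ => -sin z.1 * (sin z.1 - cos z.1) *
      (a * z.2 ^ 2 - cos z.1 * (sin z.1 - cos z.1))) (θ, r) (0, 1)
      = (-sin θ * (sin θ - cos θ)) * (2 * a * r) := by
    rw [hF1]
    simp only [ContinuousLinearMap.add_apply, ContinuousLinearMap.smul_apply,
      ContinuousLinearMap.sub_apply, ContinuousLinearMap.neg_apply,
      ContinuousLinearMap.coe_fst', ContinuousLinearMap.coe_snd', smul_eq_mul]
    ring
  have e21 : fderiv ℝ (fun z : ℝ×ℝ => -z.2 * cos z.1 * (sin z.1 - cos z.1) *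
      (a * z.2 ^ 2 - cos z.1 * (sin z.1 - cos z.1))) (θ, r) (1, 0)
      = (-r * cos θ * (sin θ - cos θ)) * (sin θ * (sin θ - cos θ) - cos θ * (cos θ + sin θ)) := by
    rw [hF2]
    simp only [ContinuousLinearMap.add_apply, ContinuousLinearMap.smul_apply,
      ContinuousLinearMap.sub_apply, ContinuousLinearMap.neg_apply,
      ContinuousLinearMap.coe_fst', ContinuousLinearMap.coe_snd', smul_eq_mul]
    ring
  have e22 : fderiv ℝ (fun z : ℝ×ℝ => -z.2 * cos z.1 * (sin z.1 - cos z.1) *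
      (a * z.2 ^ 2 - cos z.1 * (sin z.1 - cos z.1))) (θ, r) (0, 1)
      = (-r * cos θ * (sin θ - cos θ)) * (2 * a * r) := by
    rw [hF2]
    simp only [ContinuousLinearMap.add_apply, ContinuousLinearMap.smul_apply,
      ContinuousLinearMap.sub_apply, ContinuousLinearMap.neg_apply,
      ContinuousLinearMap.coe_fst', ContinuousLinearMap.coe_snd', smul_eq_mul]
    ring
  beta_reduce
  rw [hrdef, e11, e12, e21, e22]
  have hT : (-sin θ * (sin θ - cos θ)) * (sin θ * (sin θ - cos θ) - cos θ * (cos θ + sin θ))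
      + (-r * cos θ * (sin θ - cos θ)) * (2 * a * r)
      = (sin θ - cos θ) * (2 * cos θ - sin θ) := by
    have hpyth := sin_sq_add_cos_sq θ
    linear_combination (-2*cos θ*(sin θ - cos θ)) * hr2 + (-(sin θ - cos θ)*(sin θ - 2*cos θ)) * hpyth
  have hg1ne : (-sin θ * (sin θ - cos θ)) ≠ 0 := by nlinarith
  refine ⟨?_, ?_, ?_, ?_, ?_⟩
  · rw [Matrix.det_fin_two_of]; ring
  · rw [Matrix.trace_fin_two_of]
    exact rank_one_eigen _ _ _ _ hg1ne
  · rw [Matrix.trace_fin_two_of, hT, tan_eq_sin_div_cos, lt_div_iff₀ hc]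
    constructor <;> intro h <;> nlinarith
  · rw [Matrix.trace_fin_two_of, hT, tan_eq_sin_div_cos, div_lt_iff₀ hc]
    constructor <;> intro h <;> nlinarith
  · intro h
    rw [Matrix.trace_fin_two_of, hT]
    have ht : tan θ = 2 := by rw [h, tan_arctan]
    rw [tan_eq_sin_div_cos] at ht
    have hs2 : sin θ = 2 * cos θ := by field_simp at ht; linarith
    rw [hs2]; ring
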